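/- Let h ≥ 1 and m, k ≥ 2 be integers. Then σ_{h,1,1}(T̂_{m,k}) = σ*_{h,1,1}(T̂_{m,k}) = max{h + 2m + 1, 2h + m}. -/

import Mathlib

open SimpleGraph

/-- An `L(h,p,p)`-labelling of `G` with span `ℓ`: labels in `{0,…,ℓ}`, labels of vertices at
distance 1 differ by at least `h`, labels of vertices at distance 2 or 3 differ by at least `p`. -/
def IsLLabelling {V : Type} (G : SimpleGraph V) (h p ℓ : ℕ) (f : V → ℕ) : Prop :=
  (∀ v, f v ≤ ℓ) ∧
  (∀ u v, G.dist u v = 1 → (h : ℤ) ≤ |(f u : ℤ) - (f v : ℤ)|) ∧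
  (∀ u v, G.dist u v = 2 ∨ G.dist u v = 3 → (p : ℤ) ≤ |(f u : ℤ) - (f v : ℤ)|)

/-- `λ_{h,p,p}(G)`: the minimum span of an `L(h,p,p)`-labelling of `G`. -/
noncomputable def lambdaNum {V : Type} (G : SimpleGraph V) (h p : ℕ) : ℕ :=
  sInf {ℓ : ℕ | ∃ f : V → ℕ, IsLLabelling G h p ℓ f}

/-- A circular interval modulo `n`: a set of residues of the form `{a, a+1, …, a+s}` mod `n`. -/
def IsCircInterval (n : ℕ) (I : Set (ZMod n)) : Prop :=
  ∃ (a : ZMod n) (s : ℕ), I = {x : ZMod n | ∃ i : ℕ, i ≤ s ∧ x = a + (i : ZMod n)}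

/-- An elegant `L(h,p,p)`-labelling: additionally each vertex `u` has a circular interval `I u`
modulo `ℓ+1` containing the labels of all neighbours of `u`, with `I u ∩ I v = ∅` for edges `uv`. -/
def IsElegantLLabelling {V : Type} (G : SimpleGraph V) (h p ℓ : ℕ) (f : V → ℕ) : Prop :=
  IsLLabelling G h p ℓ f ∧
  ∃ I : V → Set (ZMod (ℓ + 1)),
    (∀ u, IsCircInterval (ℓ + 1) (I u)) ∧
    (∀ u w, G.Adj u w → ((f w : ZMod (ℓ + 1)) ∈ I u)) ∧
    (∀ u v, G.Adj u v → I u ∩ I v = ∅)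

/-- `λ*_{h,p,p}(G)`: the minimum span of an elegant `L(h,p,p)`-labelling of `G`. -/
noncomputable def lambdaStar {V : Type} (G : SimpleGraph V) (h p : ℕ) : ℕ :=
  sInf {ℓ : ℕ | ∃ f : V → ℕ, IsElegantLLabelling G h p ℓ f}

/-- The `ℓ`-cyclic distance between labels `a` and `b`. -/
def cycDist (ℓ a b : ℕ) : ℤ :=
  min |(a : ℤ) - (b : ℤ)| ((ℓ : ℤ) - |(a : ℤ) - (b : ℤ)|)

/-- A `C(h,p,p)`-labelling of `G` with span `ℓ`: labels in `{0,…,ℓ-1}`, and the `ℓ`-cyclic distance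
between labels of vertices at distance 1 (resp. 2 or 3) is at least `h` (resp. `p`). -/
def IsCLabelling {V : Type} (G : SimpleGraph V) (h p ℓ : ℕ) (f : V → ℕ) : Prop :=
  (∀ v, f v < ℓ) ∧
  (∀ u v, G.dist u v = 1 → (h : ℤ) ≤ cycDist ℓ (f u) (f v)) ∧
  (∀ u v, G.dist u v = 2 ∨ G.dist u v = 3 → (p : ℤ) ≤ cycDist ℓ (f u) (f v))

/-- `σ_{h,p,p}(G)`: the minimum positive `ℓ` such that `G` has a `C(h,p,p)`-labelling of span `ℓ`. -/
noncomputable def sigmaNum {V : Type} (G : SimpleGraph V) (h p : ℕ) : ℕ :=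
  sInf {ℓ : ℕ | 0 < ℓ ∧ ∃ f : V → ℕ, IsCLabelling G h p ℓ f}

/-- An elegant `C(h,p,p)`-labelling: additionally each vertex `u` has a circular interval `I u`
modulo `ℓ` containing the labels of all neighbours of `u`, with `I u ∩ I v = ∅` for edges `uv`. -/
def IsElegantCLabelling {V : Type} (G : SimpleGraph V) (h p ℓ : ℕ) (f : V → ℕ) : Prop :=
  IsCLabelling G h p ℓ f ∧
  ∃ I : V → Set (ZMod ℓ),
    (∀ u, IsCircInterval ℓ (I u)) ∧
    (∀ u w, G.Adj u w → ((f w : ZMod ℓ) ∈ I u)) ∧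
    (∀ u v, G.Adj u v → I u ∩ I v = ∅)

/-- `σ*_{h,p,p}(G)`: the minimum positive `ℓ` such that `G` has an elegant `C(h,p,p)`-labelling
of span `ℓ`. -/
noncomputable def sigmaStar {V : Type} (G : SimpleGraph V) (h p : ℕ) : ℕ :=
  sInf {ℓ : ℕ | 0 < ℓ ∧ ∃ f : V → ℕ, IsElegantCLabelling G h p ℓ f}

/-- `Δ₂(G) = max over edges uv of (deg u + deg v)`. -/
noncomputable def deltaTwo {V : Type} (G : SimpleGraph V) [Fintype V] [DecidableRel G.Adj] : ℕ :=
  sSup {d : ℕ | ∃ u v : V, G.Adj u v ∧ d = G.degree u + G.degree v}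

namespace SSS
attribute [local instance] Classical.propDecidable
set_option linter.unusedSectionVars false

variable {V : Type}

def IsPar (G : SimpleGraph V) (r x v : V) : Prop :=
  G.Adj v x ∧ G.dist r x + 1 = G.dist r v

noncomputable def par (G : SimpleGraph V) (r v : V) : V :=
  if hx : ∃ x, IsPar G r x v then hx.choose else v

lemma par_spec {G : SimpleGraph V} {r v : V} (hx : ∃ x, IsPar G r x v) :
    IsPar G r (par G r v) v := by
  rw [par, dif_pos hx]; exact hx.choose_spec


lemma concat_isPath {a b c : V} {G : SimpleGraph V} {p : G.Walk a b} (hp : p.IsPath)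
    (h : G.Adj b c) (hc : c ∉ p.support) : (p.concat h).IsPath := by
  rw [SimpleGraph.Walk.isPath_def, SimpleGraph.Walk.support_concat,
    List.nodup_append]
  refine ⟨hp.support_nodup, List.nodup_singleton _, ?_⟩
  intro x hx y hy
  simp at hy
  subst hy
  exact fun hxy => hc (hxy ▸ hx)

section TreeLemmas
variable {G : SimpleGraph V} {r : V} (hT : G.IsTree)
include hT

lemma isPath_length_eq_dist {a b : V} {p : G.Walk a b} (hp : p.IsPath) :
    p.length = G.dist a b := by
  obtain ⟨w, hw⟩ := hT.isConnected.exists_walk_length_eq_dist a b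
  have hpu : (⟨p, hp⟩ : G.Path a b) = ⟨w.bypass, w.bypass_isPath⟩ :=
    isAcyclic_iff_path_unique.mp hT.IsAcyclic _ _
  have h1 : p.length = w.bypass.length := by
    have := congrArg (fun q : G.Path a b => q.val.length) hpu
    simpa using this
  have h2 : w.bypass.length ≤ w.length := w.length_bypass_le
  have h3 : G.dist a b ≤ p.length := dist_le p
  omega

lemma exists_path_length_eq_dist (a b : V) :
    ∃ p : G.Walk a b, p.IsPath ∧ p.length = G.dist a b := by
  obtain ⟨w, hw⟩ := hT.isConnected.exists_walk_length_eq_dist a b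
  exact ⟨w.bypass, w.bypass_isPath, isPath_length_eq_dist hT w.bypass_isPath⟩

lemma exists_par {v : V} (hv : G.dist r v ≠ 0) : ∃ x, IsPar G r x v := by
  obtain ⟨w, hw⟩ := hT.isConnected.exists_walk_length_eq_dist r v
  have hvr : v ≠ r := by
    rintro rfl
    rw [SimpleGraph.dist_self] at hv; exact hv rfl
  cases hrev : w.reverse with
  | nil =>
    exfalso
    have := congrArg SimpleGraph.Walk.length hrev
    simp at this
    rw [SimpleGraph.Walk.nil_iff_length_eq.mp this] at hw
    exact hv hw.symm
  | cons hadj q =>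
    rename_i x
    refine ⟨x, hadj, ?_⟩
    have hlen : w.length = q.length + 1 := by
      have := congrArg SimpleGraph.Walk.length hrev
      simpa using this
    have h1 : G.dist r x ≤ q.length := by
      have := dist_le q.reverse
      simpa using this
    have h2 : G.dist r v ≤ G.dist r x + 1 := by
      have ht := hT.isConnected.dist_triangle (u := r) (v := x) (w := v)
      have : G.dist x v ≤ 1 := by
        have := dist_le (SimpleGraph.Walk.cons hadj.symm SimpleGraph.Walk.nil)
        simpa using this
      omega
    omega

lemma dist_adj_ne {a b : V} (hab : G.Adj a b) : G.dist r a ≠ G.dist r b := by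
  intro heq
  obtain ⟨p, hp, hlen⟩ := exists_path_length_eq_dist hT r a
  by_cases hmem : b ∈ p.support
  · have h1 : (p.takeUntil b hmem).length = G.dist r b :=
      isPath_length_eq_dist hT (hp.takeUntil hmem)
    have h2 : (p.takeUntil b hmem).length + (p.dropUntil b hmem).length = p.length := by
      rw [← SimpleGraph.Walk.length_append, SimpleGraph.Walk.take_spec]
    have h3 : (p.dropUntil b hmem).length ≠ 0 := by
      intro h0
      exact hab.ne' (SimpleGraph.Walk.eq_of_length_eq_zero h0)
    omega
  · have hq : (p.concat hab).IsPath := concat_isPath hp hab hmem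
    have := isPath_length_eq_dist hT hq
    rw [SimpleGraph.Walk.length_concat] at this
    omega

lemma adj_dichotomy {a b : V} (hab : G.Adj a b) :
    IsPar G r a b ∨ IsPar G r b a := by
  have hne := dist_adj_ne hT (r := r) hab
  have h1 : G.dist r b ≤ G.dist r a + 1 := by
    have ht := hT.isConnected.dist_triangle (u := r) (v := a) (w := b)
    have : G.dist a b ≤ 1 := by
      have := dist_le (SimpleGraph.Walk.cons hab SimpleGraph.Walk.nil)
      simpa using this
    omega
  have h2 : G.dist r a ≤ G.dist r b + 1 := by
    have ht := hT.isConnected.dist_triangle (u := r) (v := b) (w := a)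
    have : G.dist b a ≤ 1 := by
      have := dist_le (SimpleGraph.Walk.cons hab.symm SimpleGraph.Walk.nil)
      simpa using this
    omega
  rcases Nat.lt_or_ge (G.dist r a) (G.dist r b) with h | h
  · exact Or.inl ⟨hab.symm, by omega⟩
  · exact Or.inr ⟨hab, by omega⟩

lemma par_unique {x x' v : V} (h1 : IsPar G r x v) (h2 : IsPar G r x' v) : x = x' := by
  have hd := h1.2
  obtain ⟨p, hp, hlen⟩ := exists_path_length_eq_dist hT r x
  obtain ⟨p', hp', hlen'⟩ := exists_path_length_eq_dist hT r x'
  have hvp : v ∉ p.support := by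
    intro hmem
    have ha : (p.takeUntil v hmem).length = G.dist r v :=
      isPath_length_eq_dist hT (hp.takeUntil hmem)
    have hb := SimpleGraph.Walk.length_takeUntil_le p hmem
    omega
  have hd' := h2.2
  have hvp' : v ∉ p'.support := by
    intro hmem
    have ha : (p'.takeUntil v hmem).length = G.dist r v :=
      isPath_length_eq_dist hT (hp'.takeUntil hmem)
    have hb := SimpleGraph.Walk.length_takeUntil_le p' hmem
    omega
  have hq : (p.concat h1.1.symm).IsPath := concat_isPath hp h1.1.symm hvp
  have hq' : (p'.concat h2.1.symm).IsPath := concat_isPath hp' h2.1.symm hvp'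
  have hpu : (⟨p.concat h1.1.symm, hq⟩ : G.Path r v) = ⟨p'.concat h2.1.symm, hq'⟩ :=
    isAcyclic_iff_path_unique.mp hT.IsAcyclic _ _
  have heq : p.concat h1.1.symm = p'.concat h2.1.symm := congrArg Subtype.val hpu
  have hx : (p.concat h1.1.symm).reverse.getVert 1 = x := by
    rw [SimpleGraph.Walk.reverse_concat]
    simp [SimpleGraph.Walk.getVert_cons]
  have hx' : (p'.concat h2.1.symm).reverse.getVert 1 = x' := by
    rw [SimpleGraph.Walk.reverse_concat]
    simp [SimpleGraph.Walk.getVert_cons]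
  rw [← hx, ← hx', heq]

end TreeLemmas
section Children
variable {G : SimpleGraph V} [Fintype V] [DecidableRel G.Adj] {r : V}

noncomputable def emb (V : Type) [Fintype V] : V → ℕ := fun v => (Fintype.equivFin V v : ℕ)

lemma emb_inj {v w : V} (h : emb V v = emb V w) : v = w := by
  have := Fin.val_injective h
  exact (Fintype.equivFin V).injective this

noncomputable def children (G : SimpleGraph V) [Fintype V] [DecidableRel G.Adj] (r x : V) :
    Finset V :=
  (G.neighborFinset x).filter (fun w => G.dist r w = G.dist r x + 1)

noncomputable def rk (G : SimpleGraph V) [Fintype V] [DecidableRel G.Adj] (r v : V) : ℕ :=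
  ((children G r (par G r v)).filter (fun w => emb V w < emb V v)).card

lemma mem_children {x w : V} :
    w ∈ children G r x ↔ IsPar G r x w := by
  simp only [children, Finset.mem_filter, mem_neighborFinset, IsPar]
  constructor
  · rintro ⟨h1, h2⟩; exact ⟨h1.symm, h2.symm⟩
  · rintro ⟨h1, h2⟩; exact ⟨h1.symm, h2.symm⟩

omit [Fintype V] [DecidableRel G.Adj] in
lemma par_eq (hT : G.IsTree) {x v : V} (hx : IsPar G r x v) : par G r v = x :=
  par_unique hT (par_spec ⟨x, hx⟩) hx

lemma children_card (hT : G.IsTree) {m k : ℕ}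
    (hdeg : ∀ v : V, G.dist r v < k → G.degree v = m + 1) {x : V}
    (hx : G.dist r x < k) :
    (children G r x).card = if x = r then m + 1 else m := by
  have hdegx : (G.neighborFinset x).card = m + 1 := hdeg x hx
  by_cases hxr : x = r
  · subst hxr
    rw [if_pos rfl, ← hdegx]
    congr 1
    apply Finset.ext
    intro w
    simp only [children, Finset.mem_filter, mem_neighborFinset]
    refine ⟨fun h => h.1, fun h => ⟨h, ?_⟩⟩
    rcases adj_dichotomy hT (r := x) h with hp | hp
    · have h2 := hp.2
      rw [SimpleGraph.dist_self] at h2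
      rw [SimpleGraph.dist_self]
      omega
    · have h2 := hp.2
      rw [SimpleGraph.dist_self] at h2
      omega
  · rw [if_neg hxr]
    have hx0 : G.dist r x ≠ 0 := by
      intro h0
      exact hxr (hT.isConnected.dist_eq_zero_iff.mp h0).symm
    obtain ⟨px, hpx⟩ := exists_par hT hx0
    have heq : children G r x = (G.neighborFinset x).erase px := by
      apply Finset.ext
      intro w
      rw [mem_children]
      simp only [Finset.mem_erase, mem_neighborFinset]
      constructor
      · rintro ⟨h1, h2⟩
        refine ⟨?_, h1.symm⟩
        rintro rfl
        have := hpx.2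
        omega
      · rintro ⟨h1, h2⟩
        rcases adj_dichotomy hT (r := r) h2 with hp | hp
        · exact hp
        · exact absurd (par_unique hT hp hpx) h1
    rw [heq, Finset.card_erase_of_mem (by rw [mem_neighborFinset]; exact hpx.1), hdegx]
    omega

lemma rk_lt_card (hT : G.IsTree) {x v : V} (hv : v ∈ children G r x) :
    rk G r v < (children G r x).card := by
  have hpar : par G r v = x := par_eq hT (mem_children.mp hv)
  rw [rk, hpar]
  apply Finset.card_lt_card
  rw [Finset.ssubset_iff_of_subset (Finset.filter_subset _ _)]
  exact ⟨v, hv, by simp⟩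

lemma rk_ne (hT : G.IsTree) {x v w : V} (hv : v ∈ children G r x) (hw : w ∈ children G r x)
    (hne : v ≠ w) : rk G r v ≠ rk G r w := by
  have hpv : par G r v = x := par_eq hT (mem_children.mp hv)
  have hpw : par G r w = x := par_eq hT (mem_children.mp hw)
  have key : ∀ a b : V, a ∈ children G r x → emb V a < emb V b →
      ((children G r x).filter (fun z => emb V z < emb V a)).card <
      ((children G r x).filter (fun z => emb V z < emb V b)).card := by
    intro a b ha hab
    apply Finset.card_lt_card
    constructor
    · intro z hz
      simp only [Finset.mem_filter] at hz ⊢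
      exact ⟨hz.1, hz.2.trans hab⟩
    · intro hsub
      have : a ∈ (children G r x).filter (fun z => emb V z < emb V b) := by
        simp only [Finset.mem_filter]; exact ⟨ha, hab⟩
      have := hsub this
      simp at this
  rcases lt_trichotomy (emb V v) (emb V w) with h | h | h
  · rw [rk, rk, hpv, hpw]
    exact Nat.ne_of_lt (key v w hv h)
  · exact absurd (emb_inj h) hne
  · rw [rk, rk, hpv, hpw]
    exact Nat.ne_of_gt (key w v hw h)

end Children

def skip (σ j : ℕ) : ℕ := if j < σ then j else j + 1

lemma skip_ne {σ j : ℕ} : skip σ j ≠ σ := by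
  rw [skip]; split <;> omega

lemma skip_inj {σ j j' : ℕ} (h : j ≠ j') : skip σ j ≠ skip σ j' := by
  rw [skip, skip]; split <;> split <;> omega

lemma skip_le {σ j n : ℕ} (hj : j ≤ n) (hσ : j < σ ∨ j < n) : skip σ j ≤ n := by
  rw [skip]; split <;> omega

section Lab
variable {G : SimpleGraph V} [Fintype V] [DecidableRel G.Adj] {r : V}

noncomputable def lab (G : SimpleGraph V) [Fintype V] [DecidableRel G.Adj]
    (r : V) (q m b l : ℕ) (v : V) : ℕ × ℕ × ℕ × ℕ :=
  if h0 : G.dist r v = 0 then (0, 0, 0, m + l)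
  else if hx : ∃ x, IsPar G r x v then
    have hd : G.dist r (par G r v) < G.dist r v := by
      have := (par_spec hx).2; omega
    let P := lab G r q m b l (par G r v)
    let s := skip P.2.2.2 (rk G r v)
    ((P.1 + q + P.2.2.1 + s) % l, s, b - s, m + b - (P.2.2.1 + s + (b - s)))
  else (0, 0, 0, m + l)
termination_by G.dist r v

variable {q m b l k : ℕ} (hT : G.IsTree)
  (hdeg : ∀ v : V, G.dist r v < k → G.degree v = m + 1)
  (hball : ∀ v : V, G.dist r v ≤ k)
  (hq : 1 ≤ q) (hm : 2 ≤ m) (hk : 2 ≤ k)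
  (hb : b = m + 1 - q) (hl : l = m + 2 * q + b)

lemma lab_root : lab G r q m b l r = (0, 0, 0, m + l) := by
  rw [lab, dif_pos (SimpleGraph.dist_self (G := G) (v := r))]

include hT in
lemma lab_step {v : V} (hv : G.dist r v ≠ 0) :
    lab G r q m b l v =
      (((lab G r q m b l (par G r v)).1 + q + (lab G r q m b l (par G r v)).2.2.1 +
          skip (lab G r q m b l (par G r v)).2.2.2 (rk G r v)) % l,
        skip (lab G r q m b l (par G r v)).2.2.2 (rk G r v),
        b - skip (lab G r q m b l (par G r v)).2.2.2 (rk G r v),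
        m + b - ((lab G r q m b l (par G r v)).2.2.1 +
          skip (lab G r q m b l (par G r v)).2.2.2 (rk G r v) +
          (b - skip (lab G r q m b l (par G r v)).2.2.2 (rk G r v)))) := by
  rw [lab, dif_neg hv, dif_pos (exists_par hT hv)]

lemma lab_c_le : ∀ v : V, (lab G r q m b l v).2.2.1 ≤ b := by
  intro v
  by_cases h0 : G.dist r v = 0
  · rw [lab, dif_pos h0]
    simp
  · rw [lab, dif_neg h0]
    split
    · dsimp only
      omega
    · simp

include hT hdeg hball hq hm hk hb hl in
lemma lab_s_le {v : V} (hv : G.dist r v ≠ 0) : (lab G r q m b l v).2.1 ≤ m := by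
  rw [lab_step hT hv]
  dsimp only
  have hvc : v ∈ children G r (par G r v) := by
    rw [mem_children]
    exact par_spec (exists_par hT hv)
  have hdp : G.dist r (par G r v) < k := by
    have h1 := (par_spec (exists_par hT hv)).2
    have h2 := hball v
    omega
  have hcard := children_card hT hdeg hdp
  have hrk := rk_lt_card hT hvc
  by_cases hpr : par G r v = r
  · rw [hpr] at hcard hrk ⊢
    rw [if_pos rfl] at hcard
    rw [lab_root]
    dsimp only
    have hl0 : 1 ≤ l := by omega
    apply skip_le (by omega) (Or.inl (by omega))
  · rw [if_neg hpr] at hcard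
    apply skip_le (by omega) (Or.inr (by omega))

include hT hdeg hball hq hm hk hb hl in
lemma lab_E {v : V} (hv : G.dist r v ≠ 0) :
    b ≤ (lab G r q m b l v).2.1 + (lab G r q m b l v).2.2.1 ∧
    (lab G r q m b l v).2.1 + (lab G r q m b l v).2.2.1 ≤ m ∧
    (lab G r q m b l v).2.2.1 = b - (lab G r q m b l v).2.1 := by
  have hs := lab_s_le hT hdeg hball hq hm hk hb hl hv
  have hsm : b ≤ m := by omega
  rw [lab_step hT hv] at hs ⊢
  dsimp only at hs ⊢
  omega

include hT hdeg hball hq hm hk hb hl in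
lemma lab_sigma {v : V} (hv : G.dist r v ≠ 0) :
    (q + (lab G r q m b l (par G r v)).2.2.1 + (lab G r q m b l v).2.1) +
      (q + (lab G r q m b l v).2.2.1 + (lab G r q m b l v).2.2.2) = l ∧
    (lab G r q m b l v).2.2.2 ≤ m := by
  have hE := lab_E hT hdeg hball hq hm hk hb hl hv
  have hc := lab_c_le (G := G) (r := r) (q := q) (m := m) (b := b) (l := l) (par G r v)
  rw [lab_step hT hv] at hE ⊢
  dsimp only at hE ⊢
  omega

include hq hm hb hl in
lemma lab_lt : ∀ v : V, (lab G r q m b l v).1 < l := by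
  intro v
  have hl0 : 0 < l := by omega
  by_cases h0 : G.dist r v = 0
  · rw [lab, dif_pos h0]; exact hl0
  · rw [lab, dif_neg h0]
    split
    · dsimp only
      exact Nat.mod_lt _ hl0
    · exact hl0

include hT hdeg hball hq hm hk hb hl in
lemma lab_parent {v : V} (hv : G.dist r v ≠ 0) :
    (lab G r q m b l (par G r v)).1 =
      ((lab G r q m b l v).1 +
        (q + (lab G r q m b l v).2.2.1 + (lab G r q m b l v).2.2.2)) % l := by
  have hσ := (lab_sigma hT hdeg hball hq hm hk hb hl hv).1
  have hflt : (lab G r q m b l (par G r v)).1 < l := lab_lt hq hm hb hl _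
  have hf : (lab G r q m b l v).1 =
      ((lab G r q m b l (par G r v)).1 + q + (lab G r q m b l (par G r v)).2.2.1 +
        (lab G r q m b l v).2.1) % l := by
    rw [lab_step hT hv]
  set D1 := q + (lab G r q m b l (par G r v)).2.2.1 + (lab G r q m b l v).2.1 with hD1
  set D2 := q + (lab G r q m b l v).2.2.1 + (lab G r q m b l v).2.2.2 with hD2
  have : ((lab G r q m b l v).1 + D2) % l =
      ((lab G r q m b l (par G r v)).1 + D1 + D2) % l := by
    rw [hf]
    conv_lhs => rw [Nat.mod_add_mod]
    congr 1; omega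
  rw [this]
  have h2 : (lab G r q m b l (par G r v)).1 + D1 + D2 =
      (lab G r q m b l (par G r v)).1 + l := by omega
  rw [h2, Nat.add_mod_right, Nat.mod_eq_of_lt hflt]

end Lab

section Main
variable {G : SimpleGraph V} [Fintype V] [DecidableRel G.Adj] {r : V}
variable {q m b l k : ℕ} (hT : G.IsTree)
  (hdeg : ∀ v : V, G.dist r v < k → G.degree v = m + 1)
  (hball : ∀ v : V, G.dist r v ≤ k)
  (hq : 1 ≤ q) (hm : 2 ≤ m) (hk : 2 ≤ k)
  (hb : b = m + 1 - q) (hl : l = m + 2 * q + b)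

lemma modeq_dvd {a X l' : ℕ} (h : a = X % l') : (l' : ℤ) ∣ (X : ℤ) - (a : ℤ) := by
  subst h
  exact_mod_cast (Nat.modEq_iff_dvd.mp (Nat.mod_modEq X l'))

include hT hdeg hball hq hm hk hb hl

lemma child_formula {x w : V} (hxw : IsPar G r x w) :
    (lab G r q m b l w).1 =
      ((lab G r q m b l x).1 +
        (q + (lab G r q m b l x).2.2.1 + (lab G r q m b l w).2.1)) % l ∧
    (lab G r q m b l w).2.1 ≤ m ∧
    (lab G r q m b l w).2.1 ≠ (lab G r q m b l x).2.2.2 := by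
  have hw0 : G.dist r w ≠ 0 := by have := hxw.2; omega
  have hpar : par G r w = x := par_eq hT hxw
  refine ⟨?_, lab_s_le hT hdeg hball hq hm hk hb hl hw0, ?_⟩
  · conv_lhs => rw [lab_step hT hw0]
    rw [lab_step hT hw0, hpar]
    dsimp only
    congr 1
    ring
  · rw [lab_step hT hw0, hpar]
    dsimp only
    exact skip_ne

lemma parent_formula {x w : V} (hwx : IsPar G r w x) :
    (lab G r q m b l w).1 =
      ((lab G r q m b l x).1 +
        (q + (lab G r q m b l x).2.2.1 + (lab G r q m b l x).2.2.2)) % l ∧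
    (lab G r q m b l x).2.2.2 ≤ m := by
  have hx0 : G.dist r x ≠ 0 := by have := hwx.2; omega
  have hpar : par G r x = w := par_eq hT hwx
  constructor
  · rw [← hpar]
    exact lab_parent hT hdeg hball hq hm hk hb hl hx0
  · exact (lab_sigma hT hdeg hball hq hm hk hb hl hx0).2

lemma nbr_formula {x w : V} (hadj : G.Adj x w) :
    ∃ t : ℕ, t ≤ m ∧
      (lab G r q m b l w).1 =
        ((lab G r q m b l x).1 + (q + (lab G r q m b l x).2.2.1 + t)) % l := by
  rcases adj_dichotomy hT hadj with hp | hp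
  · exact ⟨_, (child_formula hT hdeg hball hq hm hk hb hl hp).2.1,
      (child_formula hT hdeg hball hq hm hk hb hl hp).1⟩
  · exact ⟨_, (parent_formula hT hdeg hball hq hm hk hb hl hp).2,
      (parent_formula hT hdeg hball hq hm hk hb hl hp).1⟩

lemma nbr_labels_ne {x u w : V} (hu : G.Adj x u) (hw : G.Adj x w) (hne : u ≠ w) :
    (lab G r q m b l u).1 ≠ (lab G r q m b l w).1 := by
  have mod_ne : ∀ a D1 D2 : ℕ, D1 < l → D2 < l → D1 ≠ D2 →
      (a + D1) % l ≠ (a + D2) % l := by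
    intro a D1 D2 h1 h2 h3 heq
    have : D1 ≡ D2 [MOD l] := Nat.ModEq.add_left_cancel' a heq
    rw [Nat.ModEq, Nat.mod_eq_of_lt h1, Nat.mod_eq_of_lt h2] at this
    exact h3 this
  have hcx := lab_c_le (G := G) (r := r) (q := q) (m := m) (b := b) (l := l) x
  have hDlt : ∀ t : ℕ, t ≤ m → q + (lab G r q m b l x).2.2.1 + t < l := by
    intro t ht; omega
  rcases adj_dichotomy hT hu with hpu | hpu
  · rcases adj_dichotomy hT hw with hpw | hpw
    · -- both children
      obtain ⟨f1, s1, _⟩ := child_formula hT hdeg hball hq hm hk hb hl hpu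
      obtain ⟨f2, s2, _⟩ := child_formula hT hdeg hball hq hm hk hb hl hpw
      rw [f1, f2]
      refine mod_ne _ _ _ (hDlt _ s1) (hDlt _ s2) ?_
      have hsne : (lab G r q m b l u).2.1 ≠ (lab G r q m b l w).2.1 := by
        have hu' : u ∈ children G r x := mem_children.mpr hpu
        have hw' : w ∈ children G r x := mem_children.mpr hpw
        have hrk := rk_ne hT hu' hw' hne
        have hpu2 : par G r u = x := par_eq hT hpu
        have hpw2 : par G r w = x := par_eq hT hpw
        have hu0 : G.dist r u ≠ 0 := by have := hpu.2; omega
        have hw0 : G.dist r w ≠ 0 := by have := hpw.2; omega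
        rw [lab_step hT hu0, lab_step hT hw0, hpu2, hpw2]
        dsimp only
        exact skip_inj hrk
      omega
    · -- u child, w parent
      obtain ⟨f1, s1, hne1⟩ := child_formula hT hdeg hball hq hm hk hb hl hpu
      obtain ⟨f2, s2⟩ := parent_formula hT hdeg hball hq hm hk hb hl hpw
      rw [f1, f2]
      refine mod_ne _ _ _ (hDlt _ s1) (hDlt _ s2) ?_
      intro hEq
      exact hne1 (by omega)
  · rcases adj_dichotomy hT hw with hpw | hpw
    · -- u parent, w child (other order)
      obtain ⟨f2, s2, hne2⟩ := child_formula hT hdeg hball hq hm hk hb hl hpw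
      obtain ⟨f1, s1⟩ := parent_formula hT hdeg hball hq hm hk hb hl hpu
      rw [f1, f2]
      refine mod_ne _ _ _ (hDlt _ s1) (hDlt _ s2) ?_
      intro hEq
      exact hne2 (by omega)
    · -- both parents
      exact absurd (par_unique hT hpu hpw) hne

lemma shape_uuu {u x y v : V} (h1 : IsPar G r x u) (h2 : IsPar G r y x)
    (h3 : IsPar G r v y) :
    (lab G r q m b l u).1 ≠ (lab G r q m b l v).1 := by
  intro heq
  obtain ⟨f1, s1, -⟩ := child_formula hT hdeg hball hq hm hk hb hl h1
  obtain ⟨f2, -, -⟩ := child_formula hT hdeg hball hq hm hk hb hl h2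
  obtain ⟨f3, -, -⟩ := child_formula hT hdeg hball hq hm hk hb hl h3
  have d1 := modeq_dvd f1
  have d2 := modeq_dvd f2
  have d3 := modeq_dvd f3
  push_cast at d1 d2 d3
  have hx0 : G.dist r x ≠ 0 := by have := h2.2; omega
  have hy0 : G.dist r y ≠ 0 := by have := h3.2; omega
  have hEx := lab_E hT hdeg hball hq hm hk hb hl hx0
  have hEy := lab_E hT hdeg hball hq hm hk hb hl hy0
  have hcv := lab_c_le (G := G) (r := r) (q := q) (m := m) (b := b) (l := l) v
  set su := (lab G r q m b l u).2.1
  set sx := (lab G r q m b l x).2.1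
  set sy := (lab G r q m b l y).2.1
  set cx := (lab G r q m b l x).2.2.1
  set cy := (lab G r q m b l y).2.2.1
  set cv := (lab G r q m b l v).2.2.1
  have hcomb : (l : ℤ) ∣ ((q + cx + su) + (q + cy + sx) + (q + cv + sy) : ℤ) := by
    have := dvd_add (dvd_add d1 d2) d3
    have heq' : ((lab G r q m b l u).1 : ℤ) = ((lab G r q m b l v).1 : ℤ) := by
      exact_mod_cast heq
    have hrw : ((lab G r q m b l x).1 + (q + cx + su) - (lab G r q m b l u).1 : ℤ) +
        ((lab G r q m b l y).1 + (q + cy + sx) - (lab G r q m b l x).1) +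
        ((lab G r q m b l v).1 + (q + cv + sy) - (lab G r q m b l y).1) =
        ((q + cx + su) + (q + cy + sx) + (q + cv + sy)) +
          ((lab G r q m b l v).1 - (lab G r q m b l u).1) := by ring
    rw [hrw, heq'] at this
    simpa using this
  have hsu : su ≤ m := s1
  have hbd1 : (l : ℤ) < ((q + cx + su) + (q + cy + sx) + (q + cv + sy) : ℤ) := by
    push_cast; omega
  have hbd2 : ((q + cx + su) + (q + cy + sx) + (q + cv + sy) : ℤ) < 2 * l := by
    push_cast; omega
  have hdvd2 : (l : ℤ) ∣ ((q + cx + su) + (q + cy + sx) + (q + cv + sy) : ℤ) - l :=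
    dvd_sub hcomb dvd_rfl
  have := Int.le_of_dvd (by omega) hdvd2
  omega

lemma shape_uud {u x y v : V} (h1 : IsPar G r x u) (h2 : IsPar G r y x)
    (h3 : IsPar G r y v) :
    (lab G r q m b l u).1 ≠ (lab G r q m b l v).1 := by
  intro heq
  obtain ⟨f1, s1, -⟩ := child_formula hT hdeg hball hq hm hk hb hl h1
  obtain ⟨f2, -, -⟩ := child_formula hT hdeg hball hq hm hk hb hl h2
  obtain ⟨f3, s3, -⟩ := child_formula hT hdeg hball hq hm hk hb hl h3
  have d1 := modeq_dvd f1
  have d2 := modeq_dvd f2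
  have d3 := modeq_dvd f3
  push_cast at d1 d2 d3
  have hx0 : G.dist r x ≠ 0 := by have := h2.2; omega
  have hEx := lab_E hT hdeg hball hq hm hk hb hl hx0
  set su := (lab G r q m b l u).2.1
  set sx := (lab G r q m b l x).2.1
  set sv := (lab G r q m b l v).2.1
  set cx := (lab G r q m b l x).2.2.1
  set cy := (lab G r q m b l y).2.2.1
  have hcomb : (l : ℤ) ∣ ((q : ℤ) + cx + su + sx - sv) := by
    have hd := dvd_sub (dvd_add d1 d2) d3
    have heq' : ((lab G r q m b l u).1 : ℤ) = ((lab G r q m b l v).1 : ℤ) := by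
      exact_mod_cast heq
    have hrw : ((lab G r q m b l x).1 + (q + cx + su) - (lab G r q m b l u).1 : ℤ) +
        ((lab G r q m b l y).1 + (q + cy + sx) - (lab G r q m b l x).1) -
        ((lab G r q m b l y).1 + (q + cy + sv) - (lab G r q m b l v).1) =
        ((q : ℤ) + cx + su + sx - sv) +
          ((lab G r q m b l v).1 - (lab G r q m b l u).1) := by ring
    rw [hrw, heq'] at hd
    simpa using hd
  have := Int.le_of_dvd (by push_cast; omega) hcomb
  push_cast at this
  omega

lemma shape_udd {u x y v : V} (h1 : IsPar G r x u) (h2 : IsPar G r x y)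
    (h3 : IsPar G r y v) :
    (lab G r q m b l u).1 ≠ (lab G r q m b l v).1 := by
  intro heq
  obtain ⟨f1, s1, -⟩ := child_formula hT hdeg hball hq hm hk hb hl h1
  obtain ⟨f2, -, -⟩ := child_formula hT hdeg hball hq hm hk hb hl h2
  obtain ⟨f3, s3, -⟩ := child_formula hT hdeg hball hq hm hk hb hl h3
  have d1 := modeq_dvd f1
  have d2 := modeq_dvd f2
  have d3 := modeq_dvd f3
  push_cast at d1 d2 d3
  have hy0 : G.dist r y ≠ 0 := by have := h2.2; omega
  have hEy := lab_E hT hdeg hball hq hm hk hb hl hy0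
  set su := (lab G r q m b l u).2.1
  set sy := (lab G r q m b l y).2.1
  set sv := (lab G r q m b l v).2.1
  set cx := (lab G r q m b l x).2.2.1
  set cy := (lab G r q m b l y).2.2.1
  have hcomb : (l : ℤ) ∣ ((q : ℤ) + cy + sy + sv - su) := by
    have hd := dvd_sub (dvd_add d2 d3) d1
    have heq' : ((lab G r q m b l u).1 : ℤ) = ((lab G r q m b l v).1 : ℤ) := by
      exact_mod_cast heq
    have hrw : ((lab G r q m b l x).1 + (q + cx + sy) - (lab G r q m b l y).1 : ℤ) +
        ((lab G r q m b l y).1 + (q + cy + sv) - (lab G r q m b l v).1) -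
        ((lab G r q m b l x).1 + (q + cx + su) - (lab G r q m b l u).1) =
        ((q : ℤ) + cy + sy + sv - su) +
          ((lab G r q m b l u).1 - (lab G r q m b l v).1) := by ring
    rw [hrw, heq'] at hd
    simpa using hd
  have := Int.le_of_dvd (by push_cast; omega) hcomb
  push_cast at this
  omega

end Main

section Cyc

lemma cycDist_comm {l a b : ℕ} : cycDist l a b = cycDist l b a := by
  unfold cycDist
  rw [abs_sub_comm]

lemma cyc_ge {l a b D c : ℕ} (hc : 1 ≤ c) (ha : a < l) (hb : b < l) (hD1 : c ≤ D)
    (hD2 : D + c ≤ l) (hcong : b = (a + D) % l) : (c : ℤ) ≤ cycDist l a b := by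
  have hb' : (b : ℤ) = a + D ∨ (b : ℤ) = a + D - l := by
    rcases Nat.lt_or_ge (a + D) l with hlt | hge
    · left
      rw [hcong, Nat.mod_eq_of_lt hlt]
      push_cast; ring
    · right
      have h2 : a + D - l < l := by omega
      rw [hcong, Nat.mod_eq_sub_mod hge, Nat.mod_eq_of_lt h2]
      omega
  unfold cycDist
  rw [le_min_iff]
  rcases abs_cases ((a : ℤ) - b) with ⟨heq, _⟩ | ⟨heq, _⟩ <;> rw [heq] <;>
    rcases hb' with h | h <;> constructor <;> omega

lemma cyc_ge_one {l a b : ℕ} (ha : a < l) (hb : b < l) (hne : a ≠ b) :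
    (1 : ℤ) ≤ cycDist l a b := by
  unfold cycDist
  rw [le_min_iff]
  rcases abs_cases ((a : ℤ) - b) with ⟨heq, _⟩ | ⟨heq, _⟩ <;> rw [heq] <;> constructor <;> omega

end Cyc

section Main2
variable {G : SimpleGraph V} [Fintype V] [DecidableRel G.Adj] {r : V}
variable {q m b l k : ℕ} (hT : G.IsTree)
  (hdeg : ∀ v : V, G.dist r v < k → G.degree v = m + 1)
  (hball : ∀ v : V, G.dist r v ≤ k)
  (hq : 1 ≤ q) (hm : 2 ≤ m) (hk : 2 ≤ k)
  (hb : b = m + 1 - q) (hl : l = m + 2 * q + b)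

include hT hdeg hball hq hm hk hb hl

lemma cond_dist1 {u v : V} (huv : G.dist u v = 1) :
    (q : ℤ) ≤ cycDist l (lab G r q m b l u).1 (lab G r q m b l v).1 := by
  have hadj : G.Adj u v := SimpleGraph.dist_eq_one_iff_adj.mp huv
  have hub := lab_lt (G := G) (r := r) (m := m) (b := b) hq hm hb hl u
  have hvb := lab_lt (G := G) (r := r) (m := m) (b := b) hq hm hb hl v
  obtain ⟨t, ht, hf⟩ := nbr_formula hT hdeg hball hq hm hk hb hl hadj
  have hcu := lab_c_le (G := G) (r := r) (q := q) (m := m) (b := b) (l := l) u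
  exact cyc_ge hq hub hvb (c := q) (by omega) (by omega) hf

lemma cond_dist2 {u v : V} (huv : G.dist u v = 2) :
    (1 : ℤ) ≤ cycDist l (lab G r q m b l u).1 (lab G r q m b l v).1 := by
  obtain ⟨w, hwl⟩ := hT.isConnected.exists_walk_length_eq_dist u v
  rw [huv] at hwl
  have hne : u ≠ v := by
    intro h; subst h; rw [SimpleGraph.dist_self] at huv; omega
  cases w with
  | nil => simp at hwl
  | cons h1 w' =>
    cases w' with
    | nil => simp at hwl
    | cons h2 w'' =>
      cases w'' with
      | cons h3 w''' => simp [SimpleGraph.Walk.length_cons] at hwl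
      | nil =>
        exact cyc_ge_one (lab_lt hq hm hb hl u) (lab_lt hq hm hb hl v)
          (nbr_labels_ne hT hdeg hball hq hm hk hb hl h1.symm h2 hne)

lemma cond_dist3 {u v : V} (huv : G.dist u v = 3) :
    (1 : ℤ) ≤ cycDist l (lab G r q m b l u).1 (lab G r q m b l v).1 := by
  obtain ⟨w, hwl⟩ := hT.isConnected.exists_walk_length_eq_dist u v
  rw [huv] at hwl
  cases w with
  | nil => simp at hwl
  | cons h1 w' =>
    cases w' with
    | nil => simp at hwl
    | cons h2 w'' =>
      cases w'' with
      | nil => simp at hwl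
      | cons h3 w''' =>
        cases w''' with
        | cons h4 w4 => simp [SimpleGraph.Walk.length_cons] at hwl
        | nil =>
          rename_i x y
          -- walk u -h1- x -h2- y -h3- v
          have hyu : y ≠ u := by
            rintro rfl
            have := dist_le (SimpleGraph.Walk.cons h3 SimpleGraph.Walk.nil)
            simp at this
            omega
          have hxv : x ≠ v := by
            rintro rfl
            have := dist_le (SimpleGraph.Walk.cons h1 SimpleGraph.Walk.nil)
            simp at this
            omega
          apply cyc_ge_one (lab_lt hq hm hb hl u) (lab_lt hq hm hb hl v)
          rcases adj_dichotomy hT h1 with hp1 | hp1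
          · -- hp1 : u is parent of x : DDD
            have hp2 : IsPar G r x y := by
              rcases adj_dichotomy hT h2 with hp2 | hp2
              · exact hp2
              · exact absurd (par_unique hT hp2 hp1) hyu
            have hp3 : IsPar G r y v := by
              rcases adj_dichotomy hT h3 with hp3 | hp3
              · exact hp3
              · exact absurd (par_unique hT hp3 hp2) hxv.symm
            exact (shape_uuu hT hdeg hball hq hm hk hb hl hp3 hp2 hp1).symm
          · -- hp1 : x is parent of u
            rcases adj_dichotomy hT h2 with hp2 | hp2
            · -- y child of x : UDD
              have hp3 : IsPar G r y v := by
                rcases adj_dichotomy hT h3 with hp3 | hp3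
                · exact hp3
                · exact absurd (par_unique hT hp3 hp2) hxv.symm
              exact shape_udd hT hdeg hball hq hm hk hb hl hp1 hp2 hp3
            · -- y parent of x
              rcases adj_dichotomy hT h3 with hp3 | hp3
              · -- v child of y : UUD
                exact shape_uud hT hdeg hball hq hm hk hb hl hp1 hp2 hp3
              · -- v parent of y : UUU
                exact shape_uuu hT hdeg hball hq hm hk hb hl hp1 hp2 hp3

end Main2

section Eleg
variable {G : SimpleGraph V} [Fintype V] [DecidableRel G.Adj] {r : V}
variable {q m b l k : ℕ} (hT : G.IsTree)
  (hdeg : ∀ v : V, G.dist r v < k → G.degree v = m + 1)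
  (hball : ∀ v : V, G.dist r v ≤ k)
  (hq : 1 ≤ q) (hm : 2 ≤ m) (hk : 2 ≤ k)
  (hb : b = m + 1 - q) (hl : l = m + 2 * q + b)

noncomputable def Iv (G : SimpleGraph V) [Fintype V] [DecidableRel G.Adj]
    (r : V) (q m b l : ℕ) (u : V) : Set (ZMod l) :=
  {x : ZMod l | ∃ i : ℕ, i ≤ m ∧
    x = (((lab G r q m b l u).1 + q + (lab G r q m b l u).2.2.1 : ℕ) : ZMod l) + (i : ZMod l)}

include hT hdeg hball hq hm hk hb hl

lemma Iv_mem {u w : V} (hadj : G.Adj u w) :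
    ((lab G r q m b l w).1 : ZMod l) ∈ Iv G r q m b l u := by
  obtain ⟨t, ht, hf⟩ := nbr_formula hT hdeg hball hq hm hk hb hl hadj
  refine ⟨t, ht, ?_⟩
  rw [hf, ZMod.natCast_mod]
  push_cast
  ring

lemma Iv_disj_child {u v : V} (hp : IsPar G r u v) :
    Iv G r q m b l u ∩ Iv G r q m b l v = ∅ := by
  ext z
  simp only [Set.mem_inter_iff, Set.mem_empty_iff_false, iff_false, not_and, Iv,
    Set.mem_setOf_eq]
  rintro ⟨i, hi, rfl⟩ ⟨j, hj, hzj⟩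
  have hv0 : G.dist r v ≠ 0 := by have := hp.2; omega
  obtain ⟨hf, hs, -⟩ := child_formula hT hdeg hball hq hm hk hb hl hp
  have d1 := modeq_dvd hf
  push_cast at d1
  have hcast : (((lab G r q m b l u).1 + q + (lab G r q m b l u).2.2.1 + i : ℕ) : ZMod l) =
      (((lab G r q m b l v).1 + q + (lab G r q m b l v).2.2.1 + j : ℕ) : ZMod l) := by
    push_cast at hzj ⊢
    linear_combination hzj
  have d2 : (l : ℤ) ∣ (((lab G r q m b l v).1 + q + (lab G r q m b l v).2.2.1 + j : ℕ) : ℤ) -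
      (((lab G r q m b l u).1 + q + (lab G r q m b l u).2.2.1 + i : ℕ) : ℤ) :=
    Nat.modEq_iff_dvd.mp ((ZMod.natCast_eq_natCast_iff _ _ _).mp hcast)
  push_cast at d2
  have hE := lab_E hT hdeg hball hq hm hk hb hl hv0
  set fu := ((lab G r q m b l u).1 : ℤ)
  set fv := ((lab G r q m b l v).1 : ℤ)
  set cu := ((lab G r q m b l u).2.2.1 : ℤ)
  set cv := ((lab G r q m b l v).2.2.1 : ℤ)
  set sv := ((lab G r q m b l v).2.1 : ℤ)
  have hcomb : (l : ℤ) ∣ ((q : ℤ) + cv + sv + j - i) := by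
    have hd := dvd_add d2 d1
    have hrw : (fv + q + cv + j - (fu + q + cu + i)) + (fu + (q + cu + sv) - fv) =
        (q : ℤ) + cv + sv + j - i := by ring
    rw [hrw] at hd
    exact hd
  have hEl : (b : ℤ) ≤ sv + cv ∧ sv + cv ≤ (m : ℤ) := by
    constructor <;> exact_mod_cast by omega
  have := Int.le_of_dvd (by omega) hcomb
  omega

lemma exists_elegant : ∃ f : V → ℕ, IsElegantCLabelling G q 1 l f := by
  refine ⟨fun v => (lab G r q m b l v).1, ⟨?_, ?_, ?_⟩, Iv G r q m b l, ?_, ?_, ?_⟩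
  · intro v
    exact lab_lt hq hm hb hl v
  · intro u v huv
    exact cond_dist1 hT hdeg hball hq hm hk hb hl huv
  · intro u v huv
    have h1 : (1 : ℤ) ≤ cycDist l (lab G r q m b l u).1 (lab G r q m b l v).1 := by
      rcases huv with h | h
      · exact cond_dist2 hT hdeg hball hq hm hk hb hl h
      · exact cond_dist3 hT hdeg hball hq hm hk hb hl h
    exact_mod_cast h1
  · intro u
    exact ⟨_, m, rfl⟩
  · intro u w hadj
    exact Iv_mem hT hdeg hball hq hm hk hb hl hadj
  · intro u v hadj
    rcases adj_dichotomy hT hadj with hp | hp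
    · exact Iv_disj_child hT hdeg hball hq hm hk hb hl hp
    · rw [Set.inter_comm]
      exact Iv_disj_child hT hdeg hball hq hm hk hb hl hp

end Eleg

section LB
variable {G : SimpleGraph V} [Fintype V] [DecidableRel G.Adj] {r : V}
variable {q m k : ℕ} (hT : G.IsTree)
  (hdeg : ∀ v : V, G.dist r v < k → G.degree v = m + 1)
  (hball : ∀ v : V, G.dist r v ≤ k)
  (hq : 1 ≤ q) (hm : 2 ≤ m) (hk : 2 ≤ k)

lemma cyc_pos_ne {l a b : ℕ} (h : (1 : ℤ) ≤ cycDist l a b) : a ≠ b := by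
  rintro rfl
  unfold cycDist at h
  rw [sub_self, abs_zero] at h
  have h2 : (1 : ℤ) ≤ 0 := le_trans h (min_le_left _ _)
  omega

lemma resid_window {l' a b c : ℕ} (hc : 1 ≤ c) (ha : a < l') (hb : b < l')
    (hcyc : (c : ℤ) ≤ cycDist l' a b) :
    (c : ℤ) ≤ ((b : ℤ) - a) % l' ∧ ((b : ℤ) - a) % l' ≤ (l' : ℤ) - c := by
  unfold cycDist at hcyc
  rw [le_min_iff] at hcyc
  obtain ⟨hc1, hc2⟩ := hcyc
  have hne : (a : ℤ) ≠ b := by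
    intro h
    rw [h] at hc1
    simp at hc1
    omega
  rcases le_or_gt (a : ℤ) b with hab | hab
  · have hm1 : ((b : ℤ) - a) % l' = (b : ℤ) - a :=
      Int.emod_eq_of_lt (by omega) (by omega)
    rcases abs_cases ((a : ℤ) - b) with ⟨he, _⟩ | ⟨he, _⟩ <;> rw [he] at hc1 hc2 <;>
      rw [hm1] <;> constructor <;> omega
  · have hm1 : ((b : ℤ) - a) % l' = (b : ℤ) - a + l' := by
      have h1 : ((b : ℤ) - a + l' * 1) % l' = ((b : ℤ) - a) % l' :=
        Int.add_mul_emod_self_left _ _ _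
      rw [mul_one] at h1
      rw [← h1]
      exact Int.emod_eq_of_lt (by omega) (by omega)
    rcases abs_cases ((a : ℤ) - b) with ⟨he, _⟩ | ⟨he, _⟩ <;> rw [he] at hc1 hc2 <;>
      rw [hm1] <;> constructor <;> omega

lemma resid_inj {l' : ℕ} (c : ℤ) {a b : ℕ} (ha : a < l') (hb : b < l')
    (h : ((a : ℤ) - c) % l' = ((b : ℤ) - c) % l') : a = b := by
  have h2 : ((a : ℤ) - c) ≡ ((b : ℤ) - c) [ZMOD (l' : ℤ)] := h
  have h3 : (a : ℤ) ≡ (b : ℤ) [ZMOD (l' : ℤ)] := by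
    have := Int.ModEq.add_right c h2
    simpa using this
  have h4 : (a : ℤ) % l' = (b : ℤ) % l' := h3
  rw [Int.emod_eq_of_lt (by omega) (by omega), Int.emod_eq_of_lt (by omega) (by omega)] at h4
  exact_mod_cast h4

include hT in
lemma dist_eq_two' {x a b : V} (h1 : G.Adj x a) (h2 : G.Adj x b) (hne : a ≠ b) :
    G.dist a b = 2 := by
  have hp2 : (SimpleGraph.Walk.cons h2 SimpleGraph.Walk.nil : G.Walk x b).IsPath := by
    simp [SimpleGraph.Walk.isPath_def, h2.ne]
  have hp : (SimpleGraph.Walk.cons h1.symm (SimpleGraph.Walk.cons h2 SimpleGraph.Walk.nil) :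
      G.Walk a b).IsPath := by
    apply hp2.cons
    simp [h1.ne', hne]
  have := isPath_length_eq_dist hT hp
  simpa using this.symm

include hT in
lemma dist_eq_three' {a x y b : V} (h1 : G.Adj a x) (h2 : G.Adj x y) (h3 : G.Adj y b)
    (hax : a ≠ y) (hxb : x ≠ b) (hab : a ≠ b) : G.dist a b = 3 := by
  have hp3 : (SimpleGraph.Walk.cons h3 SimpleGraph.Walk.nil : G.Walk y b).IsPath := by
    simp [SimpleGraph.Walk.isPath_def, h3.ne]
  have hp2 : (SimpleGraph.Walk.cons h2 (SimpleGraph.Walk.cons h3 SimpleGraph.Walk.nil) :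
      G.Walk x b).IsPath := by
    apply hp3.cons
    simp [h2.ne, hxb]
  have hp : (SimpleGraph.Walk.cons h1
      (SimpleGraph.Walk.cons h2 (SimpleGraph.Walk.cons h3 SimpleGraph.Walk.nil)) :
      G.Walk a b).IsPath := by
    apply hp2.cons
    simp [h1.ne, hax, hab]
  have := isPath_length_eq_dist hT hp
  simpa using this.symm

include hT hdeg hball hq hm hk in
lemma lower_bound {l' : ℕ} {f : V → ℕ} (hl0 : 0 < l') (hf : IsCLabelling G q 1 l' f) :
    q + 2 * m + 1 ≤ l' ∧ 2 * q + m ≤ l' := by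
  obtain ⟨hflt, hf1, hf23⟩ := hf
  have hl0' : (0 : ℤ) < (l' : ℤ) := by exact_mod_cast hl0
  have hlne : (l' : ℤ) ≠ 0 := by omega
  have hdr : (G.neighborFinset r).card = m + 1 := by
    have h0 : G.dist r r < k := by rw [SimpleGraph.dist_self]; omega
    exact hdeg r h0
  have hner : (G.neighborFinset r).Nonempty := by
    rw [← Finset.card_pos, hdr]; omega
  set ρ : V → ℤ := fun v => ((f v : ℤ) - (f r : ℤ)) % (l' : ℤ) with hρ
  obtain ⟨u, hu, humax⟩ := Finset.exists_max_image (G.neighborFinset r) ρ hner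
  rw [mem_neighborFinset] at hu
  have hdru : G.dist r u = 1 := SimpleGraph.dist_eq_one_iff_adj.mpr hu
  have hdu : (G.neighborFinset u).card = m + 1 := hdeg u (by omega)
  have hdisj : Disjoint (G.neighborFinset r) (G.neighborFinset u) := by
    rw [Finset.disjoint_left]
    intro x hx hx'
    rw [mem_neighborFinset] at hx hx'
    have h2 := dist_eq_two' hT hx.symm hx'.symm hu.ne
    omega
  set S := G.neighborFinset r ∪ G.neighborFinset u with hS
  have hScard : S.card = 2 * m + 2 := by
    rw [hS, Finset.card_union_of_disjoint hdisj, hdr, hdu]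
    ring
  have hfne : ∀ v ∈ S, ∀ w ∈ S, v ≠ w → f v ≠ f w := by
    intro v hv w hw hvw
    apply cyc_pos_ne (l := l')
    rw [hS, Finset.mem_union, mem_neighborFinset, mem_neighborFinset] at hv hw
    rcases hv with hv | hv <;> rcases hw with hw | hw
    · exact_mod_cast hf23 v w (Or.inl (dist_eq_two' hT hv hw hvw))
    · by_cases hvu : v = u
      · subst hvu
        have hd : G.dist v w = 1 := SimpleGraph.dist_eq_one_iff_adj.mpr hw
        have := hf1 v w hd
        omega
      · by_cases hwr : w = r
        · subst hwr
          have hd : G.dist v w = 1 := SimpleGraph.dist_eq_one_iff_adj.mpr hv.symm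
          have := hf1 v w hd
          omega
        · have hd := dist_eq_three' hT hv.symm hu hw hvu (fun h => hwr h.symm) hvw
          exact_mod_cast hf23 v w (Or.inr hd)
    · by_cases hvr : v = r
      · subst hvr
        have hd : G.dist v w = 1 := SimpleGraph.dist_eq_one_iff_adj.mpr hw
        have := hf1 v w hd
        omega
      · by_cases hwu : w = u
        · subst hwu
          have hd : G.dist v w = 1 := SimpleGraph.dist_eq_one_iff_adj.mpr hv.symm
          have := hf1 v w hd
          omega
        · have hd := dist_eq_three' hT hv.symm hu.symm hw hvr (fun h => hwu h.symm) hvw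
          exact_mod_cast hf23 v w (Or.inr hd)
    · exact_mod_cast hf23 v w (Or.inl (dist_eq_two' hT hv hw hvw))
  have hSinj : Set.InjOn ρ S := by
    intro v hv w hw h
    by_contra hvw
    exact hfne v hv w hw hvw (resid_inj (f r : ℤ) (hflt v) (hflt w) h)
  have hAcard : (S.image ρ).card = 2 * m + 2 := by
    rw [Finset.card_image_of_injOn hSinj, hScard]
  have part1 : 2 * q + m ≤ l' := by
    have hinj : Set.InjOn (fun v => ((f v : ℤ) - (f u : ℤ)) % (l' : ℤ)) (G.neighborFinset u) := by
      intro v hv w hw h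
      by_contra hvw
      refine hfne v ?_ w ?_ hvw (resid_inj (f u : ℤ) (hflt v) (hflt w) h)
      · exact Finset.mem_union_right _ hv
      · exact Finset.mem_union_right _ hw
    have hsub : (G.neighborFinset u).image (fun v => ((f v : ℤ) - (f u : ℤ)) % (l' : ℤ)) ⊆
        Finset.Icc (q : ℤ) ((l' : ℤ) - q) := by
      intro z hz
      rw [Finset.mem_image] at hz
      obtain ⟨v, hv, rfl⟩ := hz
      rw [mem_neighborFinset] at hv
      have hd : G.dist u v = 1 := SimpleGraph.dist_eq_one_iff_adj.mpr hv
      have hw := resid_window hq (hflt u) (hflt v) (by exact_mod_cast hf1 u v hd)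
      rw [Finset.mem_Icc]
      exact hw
    have hcard := Finset.card_le_card hsub
    rw [Finset.card_image_of_injOn hinj, hdu, Int.card_Icc] at hcard
    omega
  have hwin_u : (q : ℤ) ≤ ρ u ∧ ρ u ≤ (l' : ℤ) - q :=
    resid_window hq (hflt r) (hflt u) (by exact_mod_cast hf1 r u hdru)
  have part2 : q + 2 * m + 1 ≤ l' := by
    set B := Finset.Ico (ρ u + 1) (ρ u + q) with hB
    have hBcard : B.card = q - 1 := by
      rw [hB, Int.card_Ico]
      have h1 : ρ u + (q : ℤ) - (ρ u + 1) = (q : ℤ) - 1 := by ring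
      rw [h1]
      omega
    have hdisjAB : Disjoint (S.image ρ) B := by
      rw [Finset.disjoint_left]
      intro z hz hzB
      rw [Finset.mem_image] at hz
      obtain ⟨v, hv, rfl⟩ := hz
      rw [hB, Finset.mem_Ico] at hzB
      rw [hS, Finset.mem_union] at hv
      rcases hv with hv | hv
      · have := humax v hv
        omega
      · rw [mem_neighborFinset] at hv
        by_cases hvr : v = r
        · subst hvr
          have h0 : ρ v = 0 := by simp [hρ]
          have h0u : 0 ≤ ρ u := Int.emod_nonneg _ hlne
          omega
        · have hd : G.dist u v = 1 := SimpleGraph.dist_eq_one_iff_adj.mpr hv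
          have hwv := resid_window hq (hflt u) (hflt v) (by exact_mod_cast hf1 u v hd)
          have e1 : Int.ModEq (l' : ℤ) (ρ v) ((f v : ℤ) - (f r : ℤ)) :=
            Int.emod_emod_of_dvd _ dvd_rfl
          have e2 : Int.ModEq (l' : ℤ) (ρ u) ((f u : ℤ) - (f r : ℤ)) :=
            Int.emod_emod_of_dvd _ dvd_rfl
          have hcong : ((f v : ℤ) - (f u : ℤ)) % (l' : ℤ) = (ρ v - ρ u) % (l' : ℤ) := by
            have h2 : Int.ModEq (l' : ℤ) (ρ v - ρ u)
                (((f v : ℤ) - (f r : ℤ)) - ((f u : ℤ) - (f r : ℤ))) := Int.ModEq.sub e1 e2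
            have h1 : ((f v : ℤ) - (f r : ℤ)) - ((f u : ℤ) - (f r : ℤ)) =
                (f v : ℤ) - (f u : ℤ) := by ring
            rw [h1] at h2
            exact h2.symm
          have hsm : (ρ v - ρ u) % (l' : ℤ) = ρ v - ρ u := by
            have hρv : 0 ≤ ρ v := Int.emod_nonneg _ hlne
            have hρvlt : ρ v < l' := Int.emod_lt_of_pos _ hl0'
            exact Int.emod_eq_of_lt (by omega) (by omega)
          omega
    have hsubU : (S.image ρ) ∪ B ⊆ Finset.Ico (0 : ℤ) (l' : ℤ) := by
      intro z hz
      rw [Finset.mem_union] at hz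
      rw [Finset.mem_Ico]
      rcases hz with hz | hz
      · rw [Finset.mem_image] at hz
        obtain ⟨v, _, rfl⟩ := hz
        exact ⟨Int.emod_nonneg _ hlne, Int.emod_lt_of_pos _ hl0'⟩
      · rw [hB, Finset.mem_Ico] at hz
        have h0u : 0 ≤ ρ u := Int.emod_nonneg _ hlne
        obtain ⟨-, h2⟩ := hwin_u
        constructor <;> omega
    have hcard := Finset.card_le_card hsubU
    rw [Finset.card_union_of_disjoint hdisjAB, hAcard, hBcard, Int.card_Ico] at hcard
    omega
  exact ⟨part2, part1⟩

end LB

end SSS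

theorem stmt16 {V : Type} [Fintype V] (G : SimpleGraph V) [DecidableRel G.Adj]
    (hT : G.IsTree) (m k : ℕ) (hm : 2 ≤ m) (hk : 2 ≤ k) (r : V)
    (hdeg : ∀ v : V, G.dist r v < k → G.degree v = m + 1)
    (hball : ∀ v : V, G.dist r v ≤ k)
    (h : ℕ) (hh : 1 ≤ h) :
    sigmaNum G h 1 = max (h + 2 * m + 1) (2 * h + m) ∧
    sigmaStar G h 1 = max (h + 2 * m + 1) (2 * h + m) := by
  obtain ⟨f, hf⟩ := SSS.exists_elegant (G := G) (r := r) (k := k) hT hdeg hball hh hm hk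
    (b := m + 1 - h) rfl (l := m + 2 * h + (m + 1 - h)) rfl
  set L := m + 2 * h + (m + 1 - h) with hL
  have hmax : max (h + 2 * m + 1) (2 * h + m) = L := by omega
  have hmem2 : L ∈ {ℓ : ℕ | 0 < ℓ ∧ ∃ f : V → ℕ, IsElegantCLabelling G h 1 ℓ f} :=
    ⟨by omega, f, hf⟩
  have hmem1 : L ∈ {ℓ : ℕ | 0 < ℓ ∧ ∃ f : V → ℕ, IsCLabelling G h 1 ℓ f} :=
    ⟨by omega, f, hf.1⟩
  have hlb1 : ∀ x ∈ {ℓ : ℕ | 0 < ℓ ∧ ∃ f : V → ℕ, IsCLabelling G h 1 ℓ f}, L ≤ x := by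
    rintro x ⟨hx0, g, hg⟩
    have := SSS.lower_bound hT hdeg hball hh hm hk hx0 hg
    omega
  have hlb2 : ∀ x ∈ {ℓ : ℕ | 0 < ℓ ∧ ∃ f : V → ℕ, IsElegantCLabelling G h 1 ℓ f}, L ≤ x := by
    rintro x ⟨hx0, g, hg⟩
    exact hlb1 x ⟨hx0, g, hg.1⟩
  constructor
  · rw [hmax, sigmaNum]
    exact le_antisymm (Nat.sInf_le hmem1) (le_csInf ⟨L, hmem1⟩ hlb1)
  · rw [hmax, sigmaStar]
    exact le_antisymm (Nat.sInf_le hmem2) (le_csInf ⟨L, hmem2⟩ hlb2)
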